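/- Let H be a complex Hilbert space and D a bounded operator on H with adjoint D* and D² = 0. Let Δ = D D* + D* D and ℋ = Ker Δ. If the range of D and the range of D* are closed, then H decomposes as the orthogonal direct sum H = ℋ ⊕ Range(D) ⊕ Range(D*). -/

import Mathlib

theorem stmt4 {H : Type*} [NormedAddCommGroup H] [InnerProductSpace ℂ H]
    [CompleteSpace H] (D Dstar : H →L[ℂ] H)
    (hadj : Dstar = ContinuousLinearMap.adjoint D)
    (hD2 : D ∘L D = 0)
    (hRD : IsClosed (Set.range D)) (hRDs : IsClosed (Set.range Dstar)) :
    (∀ x : H, ∃ h u v : H,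
        h ∈ LinearMap.ker ((D ∘L Dstar + Dstar ∘L D : H →L[ℂ] H) : H →ₗ[ℂ] H) ∧
        u ∈ Set.range D ∧ v ∈ Set.range Dstar ∧ x = h + u + v) ∧
    (∀ h ∈ LinearMap.ker ((D ∘L Dstar + Dstar ∘L D : H →L[ℂ] H) : H →ₗ[ℂ] H),
      ∀ u ∈ Set.range D, (inner ℂ h u : ℂ) = 0) ∧
    (∀ h ∈ LinearMap.ker ((D ∘L Dstar + Dstar ∘L D : H →L[ℂ] H) : H →ₗ[ℂ] H),
      ∀ v ∈ Set.range Dstar, (inner ℂ h v : ℂ) = 0) ∧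
    (∀ u ∈ Set.range D, ∀ v ∈ Set.range Dstar, (inner ℂ u v : ℂ) = 0) := by
  -- D* ∘ D* = 0
  have hDs2 : Dstar ∘L Dstar = 0 := by
    rw [hadj, ← ContinuousLinearMap.adjoint_comp, hD2]
    simp
  -- kernel characterization
  have hker : ∀ h : H, h ∈ LinearMap.ker ((D ∘L Dstar + Dstar ∘L D : H →L[ℂ] H) : H →ₗ[ℂ] H) →
      D h = 0 ∧ Dstar h = 0 := by
    intro h hh
    have hh' : (D ∘L Dstar + Dstar ∘L D) h = 0 := hh
    have h1 : (inner ℂ ((D ∘L Dstar + Dstar ∘L D) h) h : ℂ) = 0 := by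
      rw [hh']; simp
    have h2 : (inner ℂ (Dstar h) (Dstar h) : ℂ) + inner ℂ (D h) (D h) = 0 := by
      rw [ContinuousLinearMap.add_apply, inner_add_left,
        ContinuousLinearMap.comp_apply, ContinuousLinearMap.comp_apply] at h1
      rw [← h1]
      congr 1
      · rw [hadj]
        exact ContinuousLinearMap.adjoint_inner_right D _ _
      · rw [hadj]
        exact (ContinuousLinearMap.adjoint_inner_left D _ _).symm
    rw [inner_self_eq_norm_sq_to_K, inner_self_eq_norm_sq_to_K] at h2
    have h3 : (‖Dstar h‖ : ℝ)^2 + ‖D h‖^2 = 0 := by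
      have := congrArg Complex.re h2
      simpa [← Complex.ofReal_pow] using this
    constructor
    · have : ‖D h‖ = 0 := by nlinarith [sq_nonneg ‖Dstar h‖, norm_nonneg (D h)]
      simpa [← Complex.ofReal_pow] using this
    · have : ‖Dstar h‖ = 0 := by nlinarith [sq_nonneg ‖D h‖, norm_nonneg (Dstar h)]
      simpa [← Complex.ofReal_pow] using this
  -- orthogonality facts
  have orth1 : ∀ h ∈ LinearMap.ker ((D ∘L Dstar + Dstar ∘L D : H →L[ℂ] H) : H →ₗ[ℂ] H),
      ∀ u ∈ Set.range D, (inner ℂ h u : ℂ) = 0 := by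
    rintro h hh u ⟨w, rfl⟩
    have hDs : Dstar h = 0 := (hker h hh).2
    rw [hadj] at hDs
    calc (inner ℂ h (D w) : ℂ) = inner ℂ (ContinuousLinearMap.adjoint D h) w := by
          rw [ContinuousLinearMap.adjoint_inner_left]
      _ = 0 := by rw [hDs, inner_zero_left]
  have orth2 : ∀ h ∈ LinearMap.ker ((D ∘L Dstar + Dstar ∘L D : H →L[ℂ] H) : H →ₗ[ℂ] H),
      ∀ v ∈ Set.range Dstar, (inner ℂ h v : ℂ) = 0 := by
    rintro h hh v ⟨w, rfl⟩
    have hDh : D h = 0 := (hker h hh).1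
    rw [hadj, ContinuousLinearMap.adjoint_inner_right, hDh, inner_zero_left]
  have orth3 : ∀ u ∈ Set.range D, ∀ v ∈ Set.range Dstar, (inner ℂ u v : ℂ) = 0 := by
    rintro u ⟨a, rfl⟩ v ⟨b, rfl⟩
    rw [hadj, ContinuousLinearMap.adjoint_inner_right]
    have : D (D a) = 0 := by
      have := congrArg (fun f => f a) hD2
      simpa [← Complex.ofReal_pow] using this
    rw [this, inner_zero_left]
  refine ⟨?_, orth1, orth2, orth3⟩
  -- the decomposition
  intro x
  set K : Submodule ℂ H := LinearMap.range (D : H →ₗ[ℂ] H) with hK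
  set K' : Submodule ℂ H := LinearMap.range (Dstar : H →ₗ[ℂ] H) with hK'
  have hKc : IsClosed (K : Set H) := by
    simpa [hK, LinearMap.coe_range] using hRD
  have hK'c : IsClosed ((K' : Set H)) := by
    simpa [hK', LinearMap.coe_range] using hRDs
  haveI : CompleteSpace K := hKc.completeSpace_coe
  haveI : CompleteSpace K' := hK'c.completeSpace_coe
  obtain ⟨u, hu, y, hy, hxy⟩ := K.exists_add_mem_mem_orthogonal x
  obtain ⟨v, hv, h, hh, hyv⟩ := K'.exists_add_mem_mem_orthogonal y
  -- y ∈ Kᗮ : Dstar y = 0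
  have hDsy : Dstar y = 0 := by
    refine inner_self_eq_zero.mp (?_ : (inner ℂ (Dstar y) (Dstar y) : ℂ) = 0)
    have h0 : (inner ℂ (D (Dstar y)) y : ℂ) = 0 :=
      hy (D (Dstar y)) (LinearMap.mem_range_self _ _)
    rw [hadj, ContinuousLinearMap.adjoint_inner_right]
    rw [hadj] at h0
    exact h0
  -- h ∈ K'ᗮ : D h = 0
  have hDh : D h = 0 := by
    refine inner_self_eq_zero.mp (?_ : (inner ℂ (D h) (D h) : ℂ) = 0)
    have h0 : (inner ℂ (Dstar (D h)) h : ℂ) = 0 :=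
      hh (Dstar (D h)) (LinearMap.mem_range_self _ _)
    rw [hadj, ContinuousLinearMap.adjoint_inner_left] at h0
    exact h0
  -- Dstar h = 0
  obtain ⟨b, hb⟩ := hv
  have hDsv : Dstar v = 0 := by
    rw [← hb]
    have := congrArg (fun f => f b) hDs2
    simpa using this
  have hDsh : Dstar h = 0 := by
    have : h = y - v := by rw [hyv]; abel
    rw [this, map_sub, hDsy, hDsv, sub_zero]
  refine ⟨h, u, v, ?_, ?_, ?_, ?_⟩
  · show (D ∘L Dstar + Dstar ∘L D) h = 0
    simp [ContinuousLinearMap.comp_apply, hDh, hDsh]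
  · rw [hK] at hu; exact hu
  · exact ⟨b, hb⟩
  · rw [hxy, hyv]; abel
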